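/- For every even integer n ≥ 4 and every integer k with 0 ≤ k ≤ n/2 − 2, the following inequality of real numbers holds: Σ_{i=k+1}^{n/2−1} n/(i·(n/2 − i)!) ≤ 4·(e − 1 + 1/(⌊n/4⌋)!). -/

import Mathlib

open Finset

lemma fact_ge_geom (j : ℕ) : 6 * 4 ^ j ≤ (j + 3).factorial := by
  induction j with
  | zero => simp [Nat.factorial]
  | succ N ih =>
    have : (N + 4).factorial = (N + 4) * (N + 3).factorial := rfl
    calc 6 * 4 ^ (N + 1) = 4 * (6 * 4 ^ N) := by ring
    _ ≤ 4 * (N + 3).factorial := by omega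
    _ ≤ (N + 4) * (N + 3).factorial := by
        have := (N + 3).factorial_pos; nlinarith
    _ = (N + 4).factorial := rfl

lemma tail_sum (N : ℕ) :
    ∑ x ∈ range N, (4 : ℝ) / ((x + 3).factorial : ℝ) ≤ 8/9 * (1 - (1/4)^N) := by
  induction N with
  | zero => simp
  | succ N ih =>
    rw [Finset.sum_range_succ]
    have h1 : (4 : ℝ) / ((N + 3).factorial : ℝ) ≤ (2/3) * (1/4)^N := by
      have hf : (6 * 4 ^ N : ℝ) ≤ ((N + 3).factorial : ℝ) := by
        exact_mod_cast fact_ge_geom N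
      have hp : (0:ℝ) < (4:ℝ)^N := by positivity
      rw [div_le_iff₀ (by positivity)]
      have : ((1:ℝ)/4)^N = ((4:ℝ)^N)⁻¹ := by
        rw [one_div, inv_pow]
      rw [this]
      calc (4:ℝ) = 2/3 * ((4:ℝ)^N)⁻¹ * (6 * 4^N) := by field_simp; ring
      _ ≤ 2/3 * ((4:ℝ)^N)⁻¹ * ((N + 3).factorial : ℝ) := by
          exact mul_le_mul_of_nonneg_left hf (by positivity)
    have : ((1:ℝ)/4)^(N+1) = (1/4) * (1/4)^N := by ring
    rw [this]
    nlinarith [ih, h1]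

lemma full_sum_le' (m : ℕ) (hm : 2 ≤ m) :
    ∑ i ∈ Icc 1 (m - 1), (2 * m : ℝ) / ((i : ℝ) * (((m - i).factorial : ℕ) : ℝ)) ≤ 6 := by
  match m, hm with
  | 2, _ => norm_num [show Icc 1 1 = {1} from rfl, Nat.factorial]
  | 3, _ => norm_num [show Icc 1 2 = {1, 2} from rfl, Nat.factorial]
  | 4, _ => norm_num [show Icc 1 3 = {1, 2, 3} from rfl, Nat.factorial]
  | (M + 5), _ => ?_
  have h4 : (M + 5 : ℕ) - 1 = (M + 3) + 1 := rfl
  rw [h4, sum_Icc_succ_top (by omega), show M + 3 = (M + 2) + 1 from rfl,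
    sum_Icc_succ_top (by omega), show M + 2 = (M + 1) + 1 from rfl,
    sum_Icc_succ_top (by omega)]
  have hmain : ∑ i ∈ Icc 1 (M + 1),
      (2 * (M + 5 : ℕ) : ℝ) / ((i : ℝ) * (((M + 5 - i).factorial : ℕ) : ℝ)) ≤ 8/9 := by
    have hstep : ∑ i ∈ Icc 1 (M + 1),
        (2 * (M + 5 : ℕ) : ℝ) / ((i : ℝ) * (((M + 5 - i).factorial : ℕ) : ℝ)) ≤
        ∑ i ∈ Icc 1 (M + 1), (4 : ℝ) / (((M + 4 - i).factorial : ℕ) : ℝ) := by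
      apply Finset.sum_le_sum
      intro i hi
      rw [Finset.mem_Icc] at hi
      obtain ⟨hi1, hi2⟩ := hi
      have hc : M + 5 - i = (M + 4 - i) + 1 := by omega
      rw [hc, Nat.factorial_succ]
      have hca : ((M + 4 - i : ℕ) : ℝ) = (M : ℝ) + 4 - (i : ℝ) := by
        push_cast [Nat.cast_sub (by omega : i ≤ M + 4)]; ring
      have hfpos : (0 : ℝ) < (((M + 4 - i).factorial : ℕ) : ℝ) := by
        exact_mod_cast (M + 4 - i).factorial_pos
      have hi1' : (1 : ℝ) ≤ (i : ℝ) := by exact_mod_cast hi1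
      have hi2' : (i : ℝ) ≤ (M : ℝ) + 1 := by exact_mod_cast hi2
      push_cast
      rw [hca]
      have hipos : (0:ℝ) < (i:ℝ) := by linarith
      have hd : (0:ℝ) < ((M:ℝ) + 4 - (i:ℝ) + 1) := by linarith
      rw [div_le_div_iff₀ (mul_pos hipos (mul_pos hd hfpos)) hfpos]
      have key : 2*((M:ℝ)+5) ≤ 4*((i:ℝ)*(((M:ℝ)+4) - (i:ℝ) + 1)) := by
        nlinarith [mul_nonneg (by linarith : (0:ℝ) ≤ (i:ℝ)-1)
          (by linarith : (0:ℝ) ≤ (M:ℝ)+4-(i:ℝ))]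
      nlinarith [mul_le_mul_of_nonneg_right key hfpos.le]
    refine hstep.trans ?_
    rw [← Finset.Ico_add_one_right_eq_Icc, Finset.sum_Ico_eq_sum_range]
    have hre : ∀ x ∈ range (M + 1),
        (4 : ℝ) / (((M + 4 - (1 + x)).factorial : ℕ) : ℝ) =
        (fun j => (4 : ℝ) / (((j + 3).factorial : ℕ) : ℝ)) ((M + 1) - 1 - x) := by
      intro x hx
      rw [Finset.mem_range] at hx
      simp only
      rw [show M + 4 - (1 + x) = (M + 1 - 1 - x) + 3 by omega]
    rw [show M + 1 + 1 - 1 = M + 1 from rfl, Finset.sum_congr rfl hre,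
      Finset.sum_range_reflect (fun j => (4 : ℝ) / (((j + 3).factorial : ℕ) : ℝ)) (M + 1)]
    have := tail_sum (M + 1)
    have hp : (0:ℝ) ≤ (1/4:ℝ)^(M+1) := by positivity
    nlinarith
  have hM : (0:ℝ) ≤ (M:ℝ) := Nat.cast_nonneg M
  rw [show M + 5 - (M + 2) = 3 by omega, show M + 5 - (M + 3) = 2 by omega,
    show M + 5 - (M + 4) = 1 by omega]
  have t2 : (2 * ((M + 2 + 3 : ℕ)) : ℝ) / (((M + 2 : ℕ)) * ((Nat.factorial 3 : ℕ))) ≤ 5/6 := by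
    have hf : ((Nat.factorial 3 : ℕ) : ℝ) = 6 := by norm_num [Nat.factorial]
    rw [hf]; push_cast
    rw [div_le_div_iff₀ (by positivity) (by norm_num)]
    nlinarith
  have t3 : (2 * ((M + 3 + 2 : ℕ)) : ℝ) / (((M + 3 : ℕ)) * ((Nat.factorial 2 : ℕ))) ≤ 5/3 := by
    have hf : ((Nat.factorial 2 : ℕ) : ℝ) = 2 := by norm_num [Nat.factorial]
    rw [hf]; push_cast
    rw [div_le_div_iff₀ (by positivity) (by norm_num)]
    nlinarith
  have t4 : (2 * ((M + 4 + 1 : ℕ)) : ℝ) / (((M + 4 : ℕ)) * ((Nat.factorial 1 : ℕ))) ≤ 5/2 := by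
    have hf : ((Nat.factorial 1 : ℕ) : ℝ) = 1 := by norm_num [Nat.factorial]
    rw [hf]; push_cast
    rw [div_le_div_iff₀ (by positivity) (by norm_num)]
    nlinarith
  set S := ∑ i ∈ Icc 1 (M + 1),
      (2 * (M + 5 : ℕ) : ℝ) / ((i : ℝ) * (((M + 5 - i).factorial : ℕ) : ℝ)) with hS
  push_cast at t2 t3 t4 ⊢
  ring_nf at t2 t3 t4 ⊢
  linarith [hmain, t2, t3, t4]


/-- For every even integer `n ≥ 4` and every integer `k` with `0 ≤ k ≤ n/2 − 2`,
`Σ_{i=k+1}^{n/2−1} n/(i·(n/2 − i)!) ≤ 4·(e − 1 + 1/(⌊n/4⌋)!)`. -/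
theorem sum_bound (n k : ℕ) (hn : 4 ≤ n) (hev : Even n) (hk : k ≤ n / 2 - 2) :
    ∑ i ∈ Finset.Icc (k + 1) (n / 2 - 1),
        (n : ℝ) / ((i : ℝ) * ((n / 2 - i).factorial : ℝ)) ≤
      4 * (Real.exp 1 - 1 + 1 / ((n / 4).factorial : ℝ)) := by
  have hn2 : n = 2 * (n / 2) := by obtain ⟨t, ht⟩ := hev; omega
  have h1 : ∑ i ∈ Finset.Icc (k + 1) (n / 2 - 1),
        (n : ℝ) / ((i : ℝ) * ((n / 2 - i).factorial : ℝ)) ≤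
      ∑ i ∈ Finset.Icc 1 (n / 2 - 1),
        (n : ℝ) / ((i : ℝ) * ((n / 2 - i).factorial : ℝ)) := by
    apply Finset.sum_le_sum_of_subset_of_nonneg (Finset.Icc_subset_Icc_left (by omega))
    intro i _ _
    positivity
  have h2 : ∑ i ∈ Finset.Icc 1 (n / 2 - 1),
        (n : ℝ) / ((i : ℝ) * ((n / 2 - i).factorial : ℝ)) =
      ∑ i ∈ Finset.Icc 1 (n / 2 - 1),
        (2 * (n / 2 : ℕ) : ℝ) / ((i : ℝ) * (((n / 2 - i).factorial : ℕ) : ℝ)) := by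
    apply Finset.sum_congr rfl
    intro i _
    congr 1
    push_cast
    rw [← Nat.cast_ofNat, ← Nat.cast_mul, ← hn2]
  have h3 := full_sum_le' (n / 2) (by omega)
  have he : (2.7182818283 : ℝ) < Real.exp 1 := Real.exp_one_gt_d9
  have hfq : (0 : ℝ) < 1 / ((n / 4).factorial : ℝ) := by positivity
  rw [h2] at h1
  have := h1.trans h3
  nlinarith [this, he, hfq]
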